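/- Let n ≥ 3 and let λ be a Jordan multiplication on ℂⁿ admitting a nonzero idempotent, i.e., some e ∈ ℂⁿ with e ≠ 0 and λ e e = e. Then there exist scalars ζ₂, …, ζₙ, each equal to 0, 1/2, or 1, such that the multiplication J(ζ) on ℂⁿ defined by e₁e₁ = e₁ and e₁eᵢ = eᵢe₁ = ζᵢeᵢ for 2 ≤ i ≤ n lies in closure(Orb(λ)). -/

import Mathlib

noncomputable section

abbrev V (n : ℕ) : Type := Fin n → ℂ

abbrev Bil (n : ℕ) : Type := V n →ₗ[ℂ] V n →ₗ[ℂ] V n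

instance BilTop (n : ℕ) : TopologicalSpace (Bil n) :=
  TopologicalSpace.induced (fun μ : Bil n => fun x y : V n => μ x y) inferInstance

/-- The change-of-basis action of a linear automorphism on multiplications. -/
def act {n : ℕ} (g : V n ≃ₗ[ℂ] V n) (μ : Bil n) : Bil n :=
  LinearMap.mk₂ ℂ (fun x y => g (μ (g.symm x) (g.symm y)))
    (fun x x' y => by simp)
    (fun c x y => by simp)
    (fun x y y' => by simp)
    (fun c x y => by simp)

/-- The orbit of a multiplication under the change-of-basis action. -/
def orb {n : ℕ} (μ : Bil n) : Set (Bil n) :=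
  Set.range fun g : V n ≃ₗ[ℂ] V n => act g μ

/-- Two multiplications are isomorphic iff they lie in the same orbit. -/
def Isom {n : ℕ} (μ ν : Bil n) : Prop := ∃ g : V n ≃ₗ[ℂ] V n, act g μ = ν

def levelOne {n : ℕ} (lam : Bil n) : Prop :=
  lam ≠ 0 ∧ closure (orb lam) ⊆ orb lam ∪ {0}

def levelTwo {n : ℕ} (lam : Bil n) : Prop :=
  (∀ μ ∈ closure (orb lam) \ orb lam, closure (orb μ) ⊆ orb μ ∪ {0}) ∧
  ∃ μ ∈ closure (orb lam) \ orb lam, μ ≠ 0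

/-- `E n k` is the standard basis vector `e_{k+1}` of `ℂⁿ` (0-indexed `k`). -/
def E (n k : ℕ) : V n := fun m => if (m : ℕ) = k then 1 else 0

/-- The bilinear multiplication determined by a table of products of basis vectors. -/
def ofTable {n : ℕ} (c : Fin n → Fin n → V n) : Bil n :=
  LinearMap.mk₂ ℂ (fun x y => ∑ i : Fin n, ∑ j : Fin n, (x i * y j) • c i j)
    (fun x x' y => by
      simp [add_mul, add_smul, Finset.sum_add_distrib])
    (fun a x y => by
      simp [Finset.smul_sum, smul_smul, mul_assoc])
    (fun x y y' => by
      simp [mul_add, add_smul, Finset.sum_add_distrib])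
    (fun a x y => by
      simp [Finset.smul_sum, smul_smul, mul_assoc, mul_left_comm])

def JordanMul {n : ℕ} (lam : Bil n) : Prop :=
  (∀ x y : V n, lam x y = lam y x) ∧
  ∀ x y : V n, lam (lam x x) (lam y x) = lam (lam (lam x x) y) x

def LieMul {n : ℕ} (lam : Bil n) : Prop :=
  (∀ x : V n, lam x x = 0) ∧
  ∀ x y z : V n, lam x (lam y z) + lam y (lam z x) + lam z (lam x y) = 0

def AssocMul {n : ℕ} (lam : Bil n) : Prop :=
  ∀ x y z : V n, lam (lam x y) z = lam x (lam y z)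
/-- `J(ζ)`: `e₁e₁ = e₁`, `e₁eᵢ = eᵢe₁ = ζᵢ eᵢ` for `2 ≤ i ≤ n`. -/
def Jzeta (n : ℕ) (ζ : Fin n → ℂ) : Bil n :=
  ofTable fun i j =>
    if i.val = 0 ∧ j.val = 0 then E n 0
    else if i.val = 0 ∧ 1 ≤ j.val then ζ j • E n j.val
    else if j.val = 0 ∧ 1 ≤ i.val then ζ i • E n i.val
    else 0

/-! ### Auxiliary lemmas -/

lemma E_single {n : ℕ} (k : Fin n) : E n ↑k = Pi.single k 1 := by
  funext m; simp [E, Pi.single_apply, Fin.val_inj, eq_comm]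

lemma sum_E_smul {n : ℕ} (w : Fin n → V n) (k : Fin n) :
    (∑ i : Fin n, E n ↑k i • w i) = w k := by
  have h : ∀ i : Fin n, E n ↑k i • w i = if i = k then w i else 0 := by
    intro i
    by_cases h : i = k <;> simp [E, h, Fin.val_inj]
  simp only [h, Finset.sum_ite_eq' Finset.univ, Finset.mem_univ, if_true]

lemma decompose {n : ℕ} (u : V n) : (∑ k : Fin n, u k • E n ↑k) = u := by
  funext m
  have h : ∀ k : Fin n, (u k • E n ↑k) m = if k = m then u k else 0 := by
    intro k; by_cases h : k = m
    · simp [E, h]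
    · simp [E, h, Fin.val_inj, eq_comm, Ne.symm h]
  simp only [Finset.sum_apply, h, Finset.sum_ite_eq' Finset.univ, Finset.mem_univ, if_true]

lemma ofTable_basis {n : ℕ} (c : Fin n → Fin n → V n) (i j : Fin n) :
    ofTable c (E n ↑i) (E n ↑j) = c i j := by
  simp only [ofTable, LinearMap.mk₂_apply]
  have h1 : ∀ a : Fin n, (∑ b : Fin n, (E n ↑i a * E n ↑j b) • c a b)
      = E n ↑i a • c a j := by
    intro a
    have h : ∀ b : Fin n, (E n ↑i a * E n ↑j b) • c a b
        = if b = j then E n ↑i a • c a b else 0 := by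
      intro b; by_cases h : b = j <;> simp [E, h, Fin.val_inj]
    simp only [h, Finset.sum_ite_eq' Finset.univ, Finset.mem_univ, if_true]
  simp only [h1]
  exact sum_E_smul (fun a => c a j) i

lemma diag_apply {n : ℕ} (f : V n →ₗ[ℂ] V n) (ζ : Fin n → ℂ)
    (h : ∀ k : Fin n, f (E n ↑k) = ζ k • E n ↑k) (u : V n) (m : Fin n) :
    f u m = ζ m * u m := by
  conv_lhs => rw [← decompose u]
  rw [map_sum]
  simp only [map_smul, h]
  have h2 : ∀ k : Fin n, (u k • ζ k • E n ↑k) m = if k = m then ζ m * u m else 0 := by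
    intro k; by_cases hk : k = m
    · simp [E, hk]; ring
    · simp [E, hk, Fin.val_inj, eq_comm, Ne.symm hk]
  rw [Finset.sum_apply]
  simp only [h2, Finset.sum_ite_eq' Finset.univ, Finset.mem_univ, if_true]

def P (n : ℕ) [NeZero n] : V n →ₗ[ℂ] V n := (LinearMap.proj 0).smulRight (E n 0)

lemma P_apply {n : ℕ} [NeZero n] (x : V n) : P n x = x 0 • E n 0 := rfl

lemma E0_zero {n : ℕ} [NeZero n] : E n 0 (0 : Fin n) = 1 := by simp [E]

def dmap (n : ℕ) [NeZero n] (t : ℂ) : V n →ₗ[ℂ] V n := P n + t • (LinearMap.id - P n)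

lemma dmap_apply {n : ℕ} [NeZero n] (t : ℂ) (x : V n) :
    dmap n t x = x 0 • E n 0 + t • (x - x 0 • E n 0) := by
  simp [dmap, P_apply]

lemma dmap_dmap {n : ℕ} [NeZero n] (t s : ℂ) (x : V n) :
    dmap n t (dmap n s x) = x 0 • E n 0 + (t * s) • (x - x 0 • E n 0) := by
  have h0 : (dmap n s x) 0 = x 0 := by
    simp [dmap_apply, E0_zero]
  rw [dmap_apply, h0, dmap_apply]
  match_scalars <;> ring

def Dt (n : ℕ) [NeZero n] (t : ℂ) (ht : t ≠ 0) : V n ≃ₗ[ℂ] V n :=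
  LinearEquiv.ofLinear (dmap n t) (dmap n t⁻¹)
    (LinearMap.ext fun x => by
      simp only [LinearMap.comp_apply, dmap_dmap, mul_inv_cancel₀ ht, LinearMap.id_apply]
      match_scalars <;> ring)
    (LinearMap.ext fun x => by
      simp only [LinearMap.comp_apply, dmap_dmap, inv_mul_cancel₀ ht, LinearMap.id_apply]
      match_scalars <;> ring)

/-- The key algebraic identity behind the degeneration. -/
lemma key_identity (n : ℕ) [NeZero n] (ν Jz : Bil n) (ζ : Fin n → ℂ)
    (hν00 : ν (E n 0) (E n 0) = E n 0)
    (hνsymm : ∀ u w, ν u w = ν w u)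
    (hνd : ∀ (u : V n) (m : Fin n), ν (E n 0) u m = ζ m * u m)
    (t : ℂ) (ht : t ≠ 0) (x y : V n)
    (hJz : Jz x y = (x 0 * y 0) • E n 0
      + x 0 • ν (E n 0) (y - y 0 • E n 0) + y 0 • ν (E n 0) (x - x 0 • E n 0)) :
    dmap n t⁻¹ (ν (dmap n t x) (dmap n t y)) = Jz x y
      + t • ν (x - x 0 • E n 0) (y - y 0 • E n 0)
      + (t * t - t) • ((ν (x - x 0 • E n 0) (y - y 0 • E n 0) 0) • E n 0) := by
  set x' := x - x 0 • E n 0 with hx'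
  set y' := y - y 0 • E n 0 with hy'
  have hx'0 : x' 0 = 0 := by simp [hx', E0_zero]
  have hy'0 : y' 0 = 0 := by simp [hy', E0_zero]
  have hN : ν (dmap n t x) (dmap n t y) = (x 0 * y 0) • E n 0
      + (t * x 0) • ν (E n 0) y' + (t * y 0) • ν (E n 0) x'
      + (t * t) • ν x' y' := by
    rw [dmap_apply, dmap_apply, ← hx', ← hy']
    simp only [map_add, map_smul, LinearMap.add_apply, LinearMap.smul_apply, hν00,
      hνsymm x' (E n 0)]
    match_scalars <;> ring
  have hN0 : (ν (dmap n t x) (dmap n t y)) 0 = x 0 * y 0 + (t * t) * (ν x' y') 0 := by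
    rw [hN]
    simp [E0_zero, hνd, hx'0, hy'0]
  rw [dmap_apply, hN0, hN, hJz]
  have hA0 : ν (E n 0) y' 0 = 0 := by simp [hνd, hy'0]
  have hB0 : ν (E n 0) x' 0 = 0 := by simp [hνd, hx'0]
  match_scalars <;> field_simp <;> ring

theorem jordan_idempotent_degenerates (n : ℕ) (hn : 3 ≤ n) (lam : Bil n)
    (hJ : JordanMul lam) (e : V n) (he : e ≠ 0) (hee : lam e e = e) :
    ∃ ζ : Fin n → ℂ,
      (∀ j : Fin n, 1 ≤ j.val → (ζ j = 0 ∨ ζ j = 1 / 2 ∨ ζ j = 1)) ∧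
      Jzeta n ζ ∈ closure (orb lam) := by
  classical
  haveI : NeZero n := ⟨by omega⟩
  obtain ⟨hsymm, hjor⟩ := hJ
  -- the cubic identity for L = lam e
  have hcubem : ∀ (z : V n) (m : Fin n),
      (2:ℂ) * lam e (lam e (lam e z)) m - 3 * lam e (lam e z) m + lam e z m = 0 := by
    intro z m
    have h1 := hjor (e + z) e
    have h2 := hjor (e - z) e
    have h3 := hjor (e + (2:ℂ) • z) e
    simp only [map_add, map_sub, map_smul, LinearMap.add_apply, LinearMap.sub_apply,
      LinearMap.smul_apply, hee, hsymm _ e] at h1 h2 h3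
    have h1' := congrFun h1 m
    have h2' := congrFun h2 m
    have h3' := congrFun h3 m
    simp only [Pi.add_apply, Pi.sub_apply, Pi.smul_apply, smul_eq_mul] at h1' h2' h3'
    linear_combination (-1 : ℂ) * h1' + (1/3) * h2' + (1/6) * h3'
  -- the set of eigenvectors
  set S : Set (V n) := {v | lam e v = 0 ∨ lam e v = (1/2 : ℂ) • v ∨ lam e v = v} with hS
  have hes : ({e} : Set (V n)) ⊆ S := by
    intro w hw
    rw [Set.mem_singleton_iff] at hw
    subst hw
    exact Or.inr (Or.inr hee)
  have hspan : Submodule.span ℂ S = ⊤ := by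
    rw [eq_top_iff]
    rintro z -
    have h0 : ((2:ℂ) • lam e (lam e z) - (3:ℂ) • lam e z + z) ∈ S := by
      left
      funext m
      simp only [map_add, map_sub, map_smul, Pi.add_apply, Pi.sub_apply, Pi.smul_apply,
        smul_eq_mul, Pi.zero_apply]
      linear_combination hcubem z m
    have hh : ((-4:ℂ) • lam e (lam e z) + (4:ℂ) • lam e z) ∈ S := by
      right; left
      funext m
      simp only [map_add, map_sub, map_smul, Pi.add_apply, Pi.sub_apply, Pi.smul_apply,
        smul_eq_mul, Pi.zero_apply]
      linear_combination (-2 : ℂ) * hcubem z m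
    have h1 : ((2:ℂ) • lam e (lam e z) - lam e z) ∈ S := by
      right; right
      funext m
      simp only [map_add, map_sub, map_smul, Pi.add_apply, Pi.sub_apply, Pi.smul_apply,
        smul_eq_mul, Pi.zero_apply]
      linear_combination hcubem z m
    have hz : z = ((2:ℂ) • lam e (lam e z) - (3:ℂ) • lam e z + z)
        + ((-4:ℂ) • lam e (lam e z) + (4:ℂ) • lam e z)
        + ((2:ℂ) • lam e (lam e z) - lam e z) := by
      module
    rw [hz]
    exact add_mem (add_mem (Submodule.subset_span h0) (Submodule.subset_span hh))
      (Submodule.subset_span h1)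
  -- extend {e} to a basis of eigenvectors
  have hli : LinearIndepOn ℂ id ({e} : Set (V n)) :=
    (linearIndepOn_singleton_iff ℂ).mpr he
  set T : Set (V n) := hli.extend hes with hT
  have hliT : LinearIndependent ℂ ((↑) : T → V n) := hli.linearIndepOn_extend hes
  have hspT : ⊤ ≤ Submodule.span ℂ (Set.range ((↑) : T → V n)) := by
    rw [Subtype.range_coe]
    rw [← hspan]
    exact Submodule.span_le.2 (hli.subset_span_extend hes)
  set b : Module.Basis T ℂ (V n) := Module.Basis.mk hliT hspT with hb
  haveI : Fintype T := FiniteDimensional.fintypeBasisIndex b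
  have hcard : Fintype.card T = n := by
    have h1 := Module.finrank_eq_card_basis b
    rw [Module.finrank_fin_fun ℂ] at h1
    omega
  have heT : e ∈ T := hli.subset_extend hes rfl
  set τ : T ≃ Fin n := Fintype.equivFinOfCardEq hcard with hτ
  set σ : Fin n ≃ T := (Equiv.swap (0 : Fin n) (τ ⟨e, heT⟩)).trans τ.symm with hσ
  have hσ0 : σ 0 = ⟨e, heT⟩ := by
    simp [hσ, Equiv.swap_apply_left]
  set bV : Module.Basis (Fin n) ℂ (V n) := b.reindex σ.symm with hbV
  have hbv : ∀ k : Fin n, bV k = ↑(σ k) := by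
    intro k
    rw [hbV, Module.Basis.reindex_apply, Equiv.symm_symm, hb, Module.Basis.mk_apply]
  have hv0 : bV 0 = e := by rw [hbv 0, hσ0]
  have hvS : ∀ k : Fin n, (↑(σ k) : V n) ∈ S := fun k => hli.extend_subset hes (σ k).2
  -- the eigenvalues
  set ζ : Fin n → ℂ := fun k =>
    if lam e (bV k) = 0 then 0
    else if lam e (bV k) = (1/2 : ℂ) • bV k then 1/2 else 1 with hζ
  have heig : ∀ k : Fin n, lam e (bV k) = ζ k • bV k := by
    intro k
    have hks := hvS k
    rw [← hbv k] at hks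
    simp only [hζ]
    by_cases h0 : lam e (bV k) = 0
    · rw [if_pos h0, h0, zero_smul]
    · by_cases h1 : lam e (bV k) = (1/2 : ℂ) • bV k
      · rw [if_neg h0, if_pos h1, h1]
      · rw [if_neg h0, if_neg h1]
        rcases hks with h | h | h
        · exact absurd h h0
        · exact absurd h h1
        · rw [h, one_smul]
  have hζrange : ∀ j : Fin n, ζ j = 0 ∨ ζ j = 1 / 2 ∨ ζ j = 1 := by
    intro j
    simp only [hζ]
    split_ifs <;> norm_num
  -- the coordinate equivalence
  set B : V n ≃ₗ[ℂ] V n := bV.equivFun.symm with hBdef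
  have hBE : ∀ k : Fin n, B (E n ↑k) = bV k := by
    intro k
    rw [hBdef, Module.Basis.equivFun_symm_apply]
    exact sum_E_smul (fun i => bV i) k
  have hE0 : E n ↑(0 : Fin n) = E n 0 := by norm_num
  have hBE0 : B (E n 0) = e := by rw [← hE0, hBE 0, hv0]
  set ν : Bil n := act B.symm lam with hν
  have hνapp : ∀ u w : V n, ν u w = B.symm (lam (B u) (B w)) := by
    intro u w
    rw [hν]
    simp [act]
  have hνsymm : ∀ u w : V n, ν u w = ν w u := by
    intro u w
    rw [hνapp, hνapp, hsymm]
  have hν00 : ν (E n 0) (E n 0) = E n 0 := by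
    rw [hνapp, hBE0, hee, ← hBE0, LinearEquiv.symm_apply_apply]
  have hνE : ∀ k : Fin n, ν (E n 0) (E n ↑k) = ζ k • E n ↑k := by
    intro k
    rw [hνapp, hBE0, hBE, heig, map_smul, ← hBE, LinearEquiv.symm_apply_apply]
  have hνd : ∀ (u : V n) (m : Fin n), ν (E n 0) u m = ζ m * u m :=
    diag_apply (ν (E n 0)) ζ hνE
  -- Jzeta in terms of ν
  set R : Bil n := LinearMap.mk₂ ℂ
    (fun x y => (x 0 * y 0) • E n 0 + x 0 • ν (E n 0) (y - y 0 • E n 0)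
      + y 0 • ν (E n 0) (x - x 0 • E n 0))
    (fun x x' y => by
      simp only [Pi.add_apply, map_add, map_sub, map_smul, add_smul]
      module)
    (fun c x y => by
      simp only [Pi.smul_apply, map_sub, map_smul, smul_eq_mul]
      match_scalars <;> ring)
    (fun x y y' => by
      simp only [Pi.add_apply, map_add, map_sub, map_smul, add_smul]
      module)
    (fun c x y => by
      simp only [Pi.smul_apply, map_sub, map_smul, smul_eq_mul]
      match_scalars <;> ring) with hR
  have hJzR : Jzeta n ζ = R := by
    apply (Pi.basisFun ℂ (Fin n)).ext
    intro i
    apply (Pi.basisFun ℂ (Fin n)).ext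
    intro j
    have hPB : ∀ i : Fin n, (Pi.basisFun ℂ (Fin n)) i = E n ↑i := by
      intro i
      rw [E_single]
      simp [Pi.basisFun_apply]
    rw [hPB, hPB]
    have hE00 : ∀ k : Fin n, E n ↑k (0 : Fin n) = if (k : ℕ) = 0 then 1 else 0 := by
      intro k
      simp [E, eq_comm]
    rw [show Jzeta n ζ = ofTable _ from rfl, ofTable_basis, hR]
    simp only [LinearMap.mk₂_apply]
    by_cases hi : (i : ℕ) = 0 <;> by_cases hj : (j : ℕ) = 0
    · have hi' : i = 0 := Fin.ext (by simpa using hi)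
      have hj' : j = 0 := Fin.ext (by simpa using hj)
      subst hi'; subst hj'
      rw [if_pos ⟨rfl, rfl⟩]
      rw [hE0]
      simp [E0_zero, hν00]
    · have hi' : i = 0 := Fin.ext (by simpa using hi)
      subst hi'
      rw [if_neg (by simp [hj]), if_pos ⟨rfl, by omega⟩]
      rw [hE0]
      simp [E0_zero, hE00, hj, hνE j]
    · have hj' : j = 0 := Fin.ext (by simpa using hj)
      subst hj'
      rw [if_neg (by simp [hi]), if_neg (by simp [hi]), if_pos ⟨rfl, by omega⟩]
      rw [hE0]
      simp [E0_zero, hE00, hi, hνE i]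
    · rw [if_neg (by simp [hi]), if_neg (by simp [hi]), if_neg (by simp [hj])]
      rw [hE00, hE00]
      rw [if_neg hi, if_neg hj]
      simp
  -- the degeneration
  set F : ℂ → Bil n := fun t =>
    if ht : t = 0 then lam else act ((Dt n t ht).trans B).symm lam with hF
  have hForb : ∀ t : ℂ, t ≠ 0 → F t ∈ orb lam := by
    intro t ht
    rw [hF]
    simp only [dif_neg ht]
    exact ⟨_, rfl⟩
  have hFval : ∀ (t : ℂ) (ht : t ≠ 0) (x y : V n),
      F t x y = dmap n t⁻¹ (ν (dmap n t x) (dmap n t y)) := by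
    intro t ht x y
    rw [hF]
    simp only [dif_neg ht]
    simp only [act, LinearMap.mk₂_apply, LinearEquiv.symm_symm, LinearEquiv.trans_apply,
      LinearEquiv.symm_trans_apply, hνapp, Dt, LinearEquiv.ofLinear_apply,
      LinearEquiv.ofLinear_symm_apply]
  have htend : Filter.Tendsto F (nhdsWithin (0:ℂ) {0}ᶜ) (nhds (Jzeta n ζ)) := by
    have hind : Topology.IsInducing (fun μ : Bil n => fun x y : V n => μ x y) := ⟨rfl⟩
    rw [hind.tendsto_nhds_iff]
    rw [tendsto_pi_nhds]
    intro x
    rw [tendsto_pi_nhds]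
    intro y
    set w2 : V n := ν (x - x 0 • E n 0) (y - y 0 • E n 0) with hw2
    have hpoly : Filter.Tendsto
        (fun t : ℂ => Jzeta n ζ x y + t • w2 + (t * t - t) • (w2 0 • E n 0))
        (nhdsWithin (0:ℂ) {0}ᶜ) (nhds (Jzeta n ζ x y)) := by
      have hc : Continuous
          (fun t : ℂ => Jzeta n ζ x y + t • w2 + (t * t - t) • (w2 0 • E n 0)) := by
        fun_prop
      have h0 : Filter.Tendsto
          (fun t : ℂ => Jzeta n ζ x y + t • w2 + (t * t - t) • (w2 0 • E n 0))
          (nhds 0) (nhds (Jzeta n ζ x y + (0:ℂ) • w2 + ((0:ℂ) * 0 - 0) • (w2 0 • E n 0))) :=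
        hc.tendsto 0
      have hval : Jzeta n ζ x y + (0:ℂ) • w2 + ((0:ℂ) * 0 - 0) • (w2 0 • E n 0)
          = Jzeta n ζ x y := by simp
      rw [hval] at h0
      exact h0.mono_left nhdsWithin_le_nhds
    refine hpoly.congr' ?_
    filter_upwards [self_mem_nhdsWithin] with t ht
    have ht' : t ≠ 0 := ht
    have hJzxy : Jzeta n ζ x y = (x 0 * y 0) • E n 0
        + x 0 • ν (E n 0) (y - y 0 • E n 0) + y 0 • ν (E n 0) (x - x 0 • E n 0) := by
      rw [hJzR]
      simp only [hR, LinearMap.mk₂_apply]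
    simp only [Function.comp_apply]
    rw [hFval t ht' x y]
    rw [key_identity n ν (Jzeta n ζ) ζ hν00 hνsymm hνd t ht' x y hJzxy]
  refine ⟨ζ, fun j _ => hζrange j, ?_⟩
  exact mem_closure_of_tendsto htend (Filter.eventually_iff_exists_mem.2
    ⟨{0}ᶜ, self_mem_nhdsWithin, fun t ht => hForb t ht⟩)
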